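/- Let n ≥ 1, let M, K ∈ ℝ^{n×n} be constant skew-symmetric matrices, and let S : ℝⁿ → ℝ be twice continuously differentiable. Let z : ℝ² → ℝⁿ be a differentiable solution of the multi-symplectic Hamiltonian system M z_t + K z_x = ∇S(z), and let U, V : ℝ² → ℝⁿ be differentiable solutions of the variational equation M W_t + K W_x = ∇²S(z(x,t)) W (with W = U and W = V respectively, ∇²S the Hessian of S). Then the conservation law of symplecticity holds: ∂/∂t ⟨M U, V⟩ + ∂/∂x ⟨K U, V⟩ = 0 at every point of ℝ², where ⟨·,·⟩ is the standard inner product on ℝⁿ. -/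

import Mathlib

open Matrix

/-- Product rule for `s ↦ (A *ᵥ u s) ⬝ᵥ v s`. -/
private lemma hasDerivAt_mulVec_dot {n : ℕ} (A : Matrix (Fin n) (Fin n) ℝ)
    {u v : ℝ → Fin n → ℝ} {u' v' : Fin n → ℝ} {t : ℝ}
    (hu : HasDerivAt u u' t) (hv : HasDerivAt v v' t) :
    HasDerivAt (fun s => (A *ᵥ u s) ⬝ᵥ v s)
      ((A *ᵥ u') ⬝ᵥ v t + (A *ᵥ u t) ⬝ᵥ v') t := by
  have h : ∀ i : Fin n, HasDerivAt (fun s => (A *ᵥ u s) i * v s i)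
      ((A *ᵥ u') i * v t i + (A *ᵥ u t) i * v' i) t := by
    intro i
    have h1 : HasDerivAt (fun s => (A *ᵥ u s) i) ((A *ᵥ u') i) t := by
      simp only [Matrix.mulVec, dotProduct]
      exact HasDerivAt.fun_sum fun j _ => (hasDerivAt_pi.1 hu j).const_mul (A i j)
    exact h1.mul (hasDerivAt_pi.1 hv i)
  have hsum := HasDerivAt.fun_sum (fun i (_ : i ∈ Finset.univ) => h i)
  simpa [dotProduct, Finset.sum_add_distrib] using hsum

private lemma skew_dot {n : ℕ} {A : Matrix (Fin n) (Fin n) ℝ} (hA : Aᵀ = -A)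
    (u w : Fin n → ℝ) : (A *ᵥ u) ⬝ᵥ w = -(u ⬝ᵥ (A *ᵥ w)) := by
  rw [Matrix.dotProduct_mulVec, ← Matrix.mulVec_transpose, hA]
  simp [Matrix.neg_mulVec]

/-- For constant skew-symmetric matrices `M K ∈ ℝ^{n×n}` and
`S : ℝⁿ → ℝ` of class `C²`, let `z` be a differentiable solution of the
multi-symplectic Hamiltonian system `M z_t + K z_x = ∇S(z)` and let `U, V` be
differentiable solutions of the variational equation
`M W_t + K W_x = ∇²S(z(x,t)) W`. Then the conservation law of symplecticity
`∂_t ⟨M U, V⟩ + ∂_x ⟨K U, V⟩ = 0` holds at every point of `ℝ²`. -/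
theorem multisymplectic_hamiltonian_symplecticity_conservation
    (n : ℕ) (hn : 1 ≤ n) (M K : Matrix (Fin n) (Fin n) ℝ)
    (hM : Mᵀ = -M) (hK : Kᵀ = -K)
    (S : (Fin n → ℝ) → ℝ) (hS : ContDiff ℝ 2 S)
    (z U V : ℝ × ℝ → Fin n → ℝ)
    (hz : Differentiable ℝ z) (hU : Differentiable ℝ U)
    (hV : Differentiable ℝ V) :
    -- the gradient of `S`:
    let gradS : (Fin n → ℝ) → Fin n → ℝ := fun Z μ =>
      deriv (fun s => S (Function.update Z μ s)) (Z μ)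
    -- the Hessian of `S`:
    let hessS : (Fin n → ℝ) → Matrix (Fin n) (Fin n) ℝ := fun Z =>
      Matrix.of fun μ ν => deriv (fun s => gradS (Function.update Z μ s) ν) (Z μ)
    (∀ x t : ℝ,
      M *ᵥ (fun μ => deriv (fun s => z (x, s) μ) t)
        + K *ᵥ (fun μ => deriv (fun s => z (s, t) μ) x) = gradS (z (x, t))) →
    (∀ x t : ℝ,
      M *ᵥ (fun μ => deriv (fun s => U (x, s) μ) t)
        + K *ᵥ (fun μ => deriv (fun s => U (s, t) μ) x) =
        hessS (z (x, t)) *ᵥ U (x, t)) →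
    (∀ x t : ℝ,
      M *ᵥ (fun μ => deriv (fun s => V (x, s) μ) t)
        + K *ᵥ (fun μ => deriv (fun s => V (s, t) μ) x) =
        hessS (z (x, t)) *ᵥ V (x, t)) →
    ∀ x t : ℝ,
      deriv (fun s => (M *ᵥ U (x, s)) ⬝ᵥ V (x, s)) t
        + deriv (fun s => (K *ᵥ U (s, t)) ⬝ᵥ V (s, t)) x = 0 := by
  intro gradS hessS hzeq hUeq hVeq x t
  -- first derivative of S
  have hfd : ∀ y, HasFDerivAt S (fderiv ℝ S y) y := fun y =>
    ((hS.differentiable two_ne_zero) y).hasFDerivAt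
  -- gradS in terms of fderiv
  have hgrad : ∀ (W : Fin n → ℝ) (ν : Fin n),
      gradS W ν = fderiv ℝ S W (Pi.single ν 1) := by
    intro W ν
    have hupd : HasDerivAt (Function.update W ν) (Pi.single ν (1 : ℝ)) (W ν) :=
      hasDerivAt_update W ν (W ν)
    have hfW : HasFDerivAt S (fderiv ℝ S W) (Function.update W ν (W ν)) := by
      rw [Function.update_eq_self]; exact hfd W
    have h := hfW.comp_hasDerivAt (W ν) hupd
    exact h.deriv
  -- second derivative
  have hf'd : Differentiable ℝ (fderiv ℝ S) :=
    (hS.fderiv_right (le_refl 2)).differentiable one_ne_zero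
  have hhess : ∀ (Z : Fin n → ℝ) (μ ν : Fin n),
      hessS Z μ ν = fderiv ℝ (fderiv ℝ S) Z (Pi.single μ 1) (Pi.single ν 1) := by
    intro Z μ ν
    have hupd : HasDerivAt (Function.update Z μ) (Pi.single μ (1 : ℝ)) (Z μ) :=
      hasDerivAt_update Z μ (Z μ)
    have hfZ : HasFDerivAt (fderiv ℝ S) (fderiv ℝ (fderiv ℝ S) Z)
        (Function.update Z μ (Z μ)) := by
      rw [Function.update_eq_self]; exact (hf'd Z).hasFDerivAt
    have h1 := hfZ.comp_hasDerivAt (Z μ) hupd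
    have h2 := (ContinuousLinearMap.apply ℝ ℝ
      (Pi.single ν (1 : ℝ))).hasFDerivAt.comp_hasDerivAt (Z μ) h1
    have heq : (fun s => gradS (Function.update Z μ s) ν)
        = fun s => fderiv ℝ S (Function.update Z μ s) (Pi.single ν 1) :=
      funext fun s => hgrad _ ν
    show deriv (fun s => gradS (Function.update Z μ s) ν) (Z μ) = _
    rw [heq]
    exact h2.deriv
  -- symmetry of the Hessian
  have hsymm : ∀ Z : Fin n → ℝ, (hessS Z)ᵀ = hessS Z := by
    intro Z
    ext μ ν
    show hessS Z ν μ = hessS Z μ ν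
    rw [hhess, hhess]
    exact second_derivative_symmetric hfd (hf'd Z).hasFDerivAt _ _
  -- derivatives of U, V in each variable
  have hline_t : ∀ (W : ℝ × ℝ → Fin n → ℝ), Differentiable ℝ W →
      HasDerivAt (fun s => W (x, s)) (deriv (fun s => W (x, s)) t) t := by
    intro W hW
    exact (((hW (x, t)).comp t
      ((differentiableAt_const x).prodMk differentiableAt_id)).hasDerivAt)
  have hline_x : ∀ (W : ℝ × ℝ → Fin n → ℝ), Differentiable ℝ W →
      HasDerivAt (fun s => W (s, t)) (deriv (fun s => W (s, t)) x) x := by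
    intro W hW
    exact (((hW (x, t)).comp x
      (differentiableAt_id.prodMk (differentiableAt_const t))).hasDerivAt)
  set Ut := deriv (fun s => U (x, s)) t with hUt_def
  set Ux := deriv (fun s => U (s, t)) x with hUx_def
  set Vt := deriv (fun s => V (x, s)) t with hVt_def
  set Vx := deriv (fun s => V (s, t)) x with hVx_def
  have hUt := hline_t U hU
  have hUx := hline_x U hU
  have hVt := hline_t V hV
  have hVx := hline_x V hV
  -- componentwise derivatives agree
  have hcompU_t : (fun μ => deriv (fun s => U (x, s) μ) t) = Ut :=
    funext fun μ => (hasDerivAt_pi.1 hUt μ).deriv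
  have hcompU_x : (fun μ => deriv (fun s => U (s, t) μ) x) = Ux :=
    funext fun μ => (hasDerivAt_pi.1 hUx μ).deriv
  have hcompV_t : (fun μ => deriv (fun s => V (x, s) μ) t) = Vt :=
    funext fun μ => (hasDerivAt_pi.1 hVt μ).deriv
  have hcompV_x : (fun μ => deriv (fun s => V (s, t) μ) x) = Vx :=
    funext fun μ => (hasDerivAt_pi.1 hVx μ).deriv
  -- the variational equations in terms of Ut, Ux, Vt, Vx
  have hUvar : M *ᵥ Ut + K *ᵥ Ux = hessS (z (x, t)) *ᵥ U (x, t) := by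
    rw [← hcompU_t, ← hcompU_x]; exact hUeq x t
  have hVvar : M *ᵥ Vt + K *ᵥ Vx = hessS (z (x, t)) *ᵥ V (x, t) := by
    rw [← hcompV_t, ← hcompV_x]; exact hVeq x t
  -- compute the two derivatives in the goal
  have hd1 : deriv (fun s => (M *ᵥ U (x, s)) ⬝ᵥ V (x, s)) t
      = (M *ᵥ Ut) ⬝ᵥ V (x, t) + (M *ᵥ U (x, t)) ⬝ᵥ Vt :=
    (hasDerivAt_mulVec_dot M hUt hVt).deriv
  have hd2 : deriv (fun s => (K *ᵥ U (s, t)) ⬝ᵥ V (s, t)) x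
      = (K *ᵥ Ux) ⬝ᵥ V (x, t) + (K *ᵥ U (x, t)) ⬝ᵥ Vx :=
    (hasDerivAt_mulVec_dot K hUx hVx).deriv
  rw [hd1, hd2]
  rw [skew_dot hM (U (x, t)) Vt, skew_dot hK (U (x, t)) Vx]
  have hrw : (M *ᵥ Ut) ⬝ᵥ V (x, t) + -(U (x, t) ⬝ᵥ (M *ᵥ Vt))
      + ((K *ᵥ Ux) ⬝ᵥ V (x, t) + -(U (x, t) ⬝ᵥ (K *ᵥ Vx)))
      = (M *ᵥ Ut + K *ᵥ Ux) ⬝ᵥ V (x, t)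
        - U (x, t) ⬝ᵥ (M *ᵥ Vt + K *ᵥ Vx) := by
    rw [add_dotProduct, dotProduct_add]; ring
  rw [hrw, hUvar, hVvar]
  -- symmetric matrix: ⟨A u, v⟩ = ⟨u, A v⟩
  rw [Matrix.dotProduct_mulVec, ← Matrix.mulVec_transpose, hsymm]
  rw [sub_eq_zero]
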